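/- The set {ψ(O) : O an orientation of M} equals the set of lattice points Z_A ∩ ℤ^r of the zonotope Z_A, and two orientations O, O' satisfy ψ(O) = ψ(O') if and only if O and O' are circuit-reversal equivalent. Hence ψ induces a bijection between the set of circuit-reversal equivalence classes of orientations of M and the lattice points of Z_A. -/

import Mathlib

open Matrix

/-- A vector with all entries in `{-1,0,1}`. -/
def SignVec {m : ℕ} (C : Fin m → ℤ) : Prop := ∀ e, C e = -1 ∨ C e = 0 ∨ C e = 1

/-- A signed circuit of `A`. -/
def IsCircuit {r m : ℕ} (A : Matrix (Fin r) (Fin m) ℤ) (C : Fin m → ℤ) : Prop :=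
  SignVec C ∧ C ≠ 0 ∧ A.mulVec C = 0 ∧
    ∀ v : Fin m → ℤ, v ≠ 0 → A.mulVec v = 0 →
      {e | v e ≠ 0} ⊆ {e | C e ≠ 0} → {e | v e ≠ 0} = {e | C e ≠ 0}

/-- An orientation of the matroid: a function `E → {-1,1}`. -/
def IsOrientation {m : ℕ} (O : Fin m → ℤ) : Prop := ∀ e, O e = 1 ∨ O e = -1

/-- One circuit reversal: negate `O` on the support of a signed circuit compatible with `O`. -/
def CircuitReversal {r m : ℕ} (A : Matrix (Fin r) (Fin m) ℤ) (O O' : Fin m → ℤ) : Prop :=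
  ∃ C : Fin m → ℤ, IsCircuit A C ∧ (∀ e, C e ≠ 0 → O e = C e) ∧
    (∀ e, C e ≠ 0 → O' e = -O e) ∧ (∀ e, C e = 0 → O' e = O e)

/-- Circuit-reversal equivalence: the equivalence relation generated by circuit reversals. -/
def CircEquiv {r m : ℕ} (A : Matrix (Fin r) (Fin m) ℤ) : (Fin m → ℤ) → (Fin m → ℤ) → Prop :=
  Relation.EqvGen (CircuitReversal A)

/-- `ψ(O) = A·((O+1)/2)`. -/
def psi {r m : ℕ} (A : Matrix (Fin r) (Fin m) ℤ) (O : Fin m → ℤ) : Fin r → ℤ :=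
  A.mulVec (fun e => (O e + 1) / 2)

/-- The image of `ψ` on orientations is exactly the set of lattice points of the zonotope
`Z_A`, and `ψ(O) = ψ(O')` iff `O` and `O'` are circuit-reversal equivalent; hence `ψ`
induces a bijection between circuit-reversal classes and lattice points of `Z_A`. -/
private lemma exists_invertible_rows {K : Type*} [Field K] {r k : ℕ}
    (M : Matrix (Fin r) (Fin k) K)
    (h : LinearIndependent K (fun j : Fin k => fun i : Fin r => M i j)) :
    ∃ f : Fin k → Fin r, Function.Injective f ∧ IsUnit (M.submatrix f id).det := by
  classical
  have h' : LinearIndependent K Mᵀ := h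
  have hrk : Mᵀ.rank = k := by have := h'.rank_matrix; rw [Fintype.card_fin] at this; exact this
  have hrow : Module.finrank K (Submodule.span K (Set.range M)) = k := by
    rw [show Set.range M = Set.range M.row from rfl, ← M.rank_eq_finrank_span_row]
    rw [← Matrix.rank_transpose]
    exact hrk
  obtain ⟨b, hbsub, hbspan, hbind⟩ := exists_linearIndependent K (Set.range M)
  have hbfin : b.Finite := by
    have : Finite b := hbind.finite_of_isNoetherian
    exact Set.toFinite b
  haveI : Fintype b := hbfin.fintype
  have hbcard : b.toFinset.card = k := by
    rw [← finrank_span_set_eq_card hbind, hbspan, hrow]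
  have hcard : Fintype.card b = k := by rwa [Set.toFinset_card] at hbcard
  let e : Fin k ≃ b := (Fintype.equivFinOfCardEq hcard).symm
  have hmem : ∀ j : Fin k, (e j : Fin k → K) ∈ Set.range M := fun j => hbsub (e j).2
  choose f hf using fun j => (hmem j)
  have hfinj : Function.Injective f := by
    intro a a' haa
    have : (e a : Fin k → K) = (e a' : Fin k → K) := by rw [← hf a, ← hf a', haa]
    exact e.injective (Subtype.coe_injective this)
  refine ⟨f, hfinj, ?_⟩
  rw [← Matrix.isUnit_iff_isUnit_det]
  rw [← Matrix.linearIndependent_rows_iff_isUnit]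
  have : (fun j : Fin k => (M.submatrix f id) j) = (fun x : b => (x : Fin k → K)) ∘ e := by
    funext j
    simp only [Function.comp_apply, ← hf j]
    rfl
  show LinearIndependent K (fun j : Fin k => (M.submatrix f id) j)
  rw [this]
  exact hbind.comp e e.injective

private lemma core_cramer {K : Type*} [Field K] {r m : ℕ} (A : Matrix (Fin r) (Fin m) ℤ)
    (hTU : A.IsTotallyUnimodular) (S : Finset (Fin m))
    (hind : LinearIndependent K (fun s : {e // e ∈ S} => fun i : Fin r => ((A i s.1 : ℤ) : K)))
    (u : Fin m → K) (d : Fin r → K)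
    (hd : (A.map (Int.cast : ℤ → K)).mulVec u = d) (hu0 : ∀ e, e ∉ S → u e = 0) :
    ∃ (f : Fin S.card → Fin r) (g : Fin S.card → Fin m), Function.Injective f ∧
      Function.Injective g ∧ (∀ j, g j ∈ S) ∧
      ∀ e ∈ S, ∃ (j : Fin S.card) (s : SignType), g j = e ∧ s ≠ 0 ∧
        u e = (s : K) * (((A.map (Int.cast : ℤ → K)).submatrix f g).updateCol j (d ∘ f)).det := by
  classical
  set AK := A.map (Int.cast : ℤ → K) with hAK
  let ge : Fin S.card ≃ {e // e ∈ S} := S.equivFin.symm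
  let g : Fin S.card → Fin m := fun j => (ge j : Fin m)
  have hginj : Function.Injective g :=
    fun a a' h => ge.injective (Subtype.coe_injective h)
  have hgmem : ∀ j, g j ∈ S := fun j => (ge j).2
  -- columns of the S-submatrix are independent
  have hind2 : LinearIndependent K
      (fun j : Fin S.card => fun i : Fin r => (AK.submatrix id g) i j) := by
    have := hind.comp ge ge.injective
    exact this
  obtain ⟨f, hfinj, hfdet⟩ := exists_invertible_rows (AK.submatrix id g) hind2
  set B : Matrix (Fin S.card) (Fin S.card) K := AK.submatrix f g with hB
  have hBeq : (AK.submatrix id g).submatrix f id = B := by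
    rw [Matrix.submatrix_submatrix]; rfl
  rw [hBeq] at hfdet
  have hBunit : IsUnit B := (Matrix.isUnit_iff_isUnit_det _).mpr hfdet
  -- B *ᵥ (u ∘ g) = d ∘ f
  have hsys : B.mulVec (u ∘ g) = d ∘ f := by
    funext i
    have : (B.mulVec (u ∘ g)) i = ∑ j : Fin S.card, AK (f i) (g j) * u (g j) := by
      simp [Matrix.mulVec, dotProduct, hB, Matrix.submatrix_apply]
    rw [this]
    have h1 : ∑ j : Fin S.card, AK (f i) (g j) * u (g j)
        = ∑ s : {e // e ∈ S}, AK (f i) (s : Fin m) * u (s : Fin m) :=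
      Fintype.sum_equiv ge _ _ (fun j => rfl)
    have h2 : ∑ s : {e // e ∈ S}, AK (f i) (s : Fin m) * u (s : Fin m)
        = ∑ e ∈ S, AK (f i) e * u e := by
      rw [← Finset.sum_attach S (fun e => AK (f i) e * u e)]
      exact Finset.sum_congr rfl (fun x _ => rfl)
    have h3 : ∑ e ∈ S, AK (f i) e * u e = ∑ e : Fin m, AK (f i) e * u e := by
      apply Finset.sum_subset (Finset.subset_univ S)
      intro e _ heS
      rw [hu0 e heS, mul_zero]
    rw [h1, h2, h3]
    have : (AK.mulVec u) (f i) = d (f i) := by rw [hd]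
    simpa [Matrix.mulVec, dotProduct] using this
  -- Cramer
  have hcram : B.det • (u ∘ g) = Matrix.cramer B (d ∘ f) := by
    have hmv : B.mulVec (B.det • (u ∘ g)) = B.mulVec (Matrix.cramer B (d ∘ f)) := by
      rw [Matrix.mulVec_smul, hsys, Matrix.mulVec_cramer]
    exact (Matrix.mulVec_injective_iff_isUnit.mpr hBunit) hmv
  -- det B is ±1
  have hBdet : ∃ s : SignType, s ≠ 0 ∧ B.det = (s : K) := by
    have := hTU S.card f g hfinj hginj
    obtain ⟨s, hs⟩ := this
    have hmap : B = (A.submatrix f g).map (Int.cast : ℤ → K) := by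
      rw [hB, hAK, Matrix.submatrix_map]
    have hdetB : B.det = (((A.submatrix f g).det : ℤ) : K) := by
      rw [hmap]
      exact (RingHom.map_det (Int.castRingHom K) (A.submatrix f g)).symm
    refine ⟨s, ?_, ?_⟩
    · rintro rfl
      rw [← hs] at hdetB
      simp only [SignType.coe_zero, Int.cast_zero] at hdetB
      exact hfdet.ne_zero hdetB
    · rw [hdetB, ← hs]
      push_cast
      rfl
  obtain ⟨s, hs0, hsdet⟩ := hBdet
  refine ⟨f, g, hfinj, hginj, hgmem, ?_⟩
  intro e he
  refine ⟨ge.symm ⟨e, he⟩, s, ?_, hs0, ?_⟩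
  · show g (ge.symm ⟨e, he⟩) = e
    simp [g]
  · have hj := congrFun hcram (ge.symm ⟨e, he⟩)
    have hge : g (ge.symm ⟨e, he⟩) = e := by simp [g]
    rw [Matrix.cramer_apply] at hj
    simp only [Pi.smul_apply, Function.comp_apply, smul_eq_mul, hge] at hj
    have hss : (s : K) * (s : K) = 1 := by
      rcases s with _ | _ | _ <;> simp_all <;> ring_nf <;> simp
    calc u e = ((s : K) * (s : K)) * u e := by rw [hss, one_mul]
      _ = (s : K) * (B.det * u e) := by rw [hsdet]; ring
      _ = (s : K) * (B.updateCol (ge.symm ⟨e, he⟩) (d ∘ f)).det := by rw [hj]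

private lemma cast_mulVec {K : Type*} [Field K] {r m : ℕ} (A : Matrix (Fin r) (Fin m) ℤ)
    (v : Fin m → ℤ) (i : Fin r) :
    (A.map (Int.cast : ℤ → K)).mulVec (fun e => ((v e : ℤ) : K)) i = ((A.mulVec v i : ℤ) : K) := by
  exact (RingHom.map_mulVec (Int.castRingHom K) A v i).symm


private lemma update_inj {m k : ℕ} {g : Fin k → Fin m} {S : Finset (Fin m)}
    (hg : Function.Injective g) (hgS : ∀ j, g j ∈ S) {e0 : Fin m} (he0 : e0 ∉ S)
    (j : Fin k) : Function.Injective (Function.update g j e0) := by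
  intro a b hab
  by_cases ha : a = j <;> by_cases hb : b = j
  · rw [ha, hb]
  · exfalso; rw [Function.update_apply, Function.update_apply, if_pos ha, if_neg hb] at hab
    exact he0 (hab ▸ hgS b)
  · exfalso; rw [Function.update_apply, Function.update_apply, if_neg ha, if_pos hb] at hab
    exact he0 (hab ▸ hgS a)
  · rw [Function.update_apply, Function.update_apply, if_neg ha, if_neg hb] at hab
    exact hg hab

/-- Key circuit-existence lemma : inside the support of any nonzero rational kernel vector
there is a signed circuit. -/
private lemma exists_circuit {r m : ℕ} (A : Matrix (Fin r) (Fin m) ℤ)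
    (hTU : A.IsTotallyUnimodular) (x : Fin m → ℚ) (hx : x ≠ 0)
    (hker : (A.map (Int.cast : ℤ → ℚ)).mulVec x = 0) :
    ∃ C : Fin m → ℤ, IsCircuit A C ∧ (∀ e, C e ≠ 0 → x e ≠ 0) := by
  classical
  set AQ := A.map (Int.cast : ℤ → ℚ) with hAQ
  set P : ℕ → Prop := fun n => ∃ w : Fin m → ℚ, w ≠ 0 ∧ AQ.mulVec w = 0 ∧
    (∀ e, w e ≠ 0 → x e ≠ 0) ∧ (Finset.univ.filter (fun e => w e ≠ 0)).card = n with hP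
  have hPx : P (Finset.univ.filter (fun e => x e ≠ 0)).card :=
    ⟨x, hx, hker, fun _ h => h, rfl⟩
  set n0 := sInf {n | P n} with hn0
  have hn0P : P n0 := Nat.sInf_mem (⟨_, hPx⟩ : {n | P n}.Nonempty)
  have hn0min : ∀ k, k < n0 → ¬ P k := fun k hk hPk =>
    Nat.notMem_of_lt_sInf hk (hPk : k ∈ {n | P n})
  obtain ⟨w, hw0, hwker, hwsupp, hwcard⟩ := hn0P
  set T := Finset.univ.filter (fun e => w e ≠ 0) with hT
  have hTne : T.Nonempty := by
    have : ∃ e, w e ≠ 0 := by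
      by_contra h
      push_neg at h
      exact hw0 (funext h)
    obtain ⟨e, he⟩ := this
    exact ⟨e, by simp [hT, he]⟩
  obtain ⟨e0, he0T⟩ := hTne
  have hwe0 : w e0 ≠ 0 := by simpa [hT] using he0T
  set S := T.erase e0 with hS
  have he0S : e0 ∉ S := Finset.notMem_erase e0 T
  -- columns indexed by S are linearly independent
  have hind : LinearIndependent ℚ (fun s : {e // e ∈ S} => fun i : Fin r => ((A i s.1 : ℤ) : ℚ)) := by
    rw [Fintype.linearIndependent_iff]
    intro gg hgg
    by_contra hne
    push_neg at hne
    obtain ⟨s0, hs0⟩ := hne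
    set w' : Fin m → ℚ := fun e => if h : e ∈ S then gg ⟨e, h⟩ else 0 with hw'
    have hw'ne : w' ≠ 0 := by
      intro h
      apply hs0
      have := congrFun h s0.1
      simpa [hw', s0.2] using this
    have hw'ker : AQ.mulVec w' = 0 := by
      funext i
      have := congrFun hgg i
      simp only [Finset.sum_apply, Pi.smul_apply, smul_eq_mul, Pi.zero_apply] at this
      have hsum : AQ.mulVec w' i = ∑ s : {e // e ∈ S}, gg s * ((A i s.1 : ℤ) : ℚ) := by
        simp only [Matrix.mulVec, dotProduct]
        have hz : ∀ e ∈ Finset.univ, e ∉ S → AQ i e * w' e = 0 := by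
          intro e _ heS
          simp [hw', heS]
        rw [show (∑ e : Fin m, AQ i e * w' e) = ∑ e ∈ S, AQ i e * w' e from
          (Finset.sum_subset (Finset.subset_univ S) hz).symm]
        rw [← Finset.sum_attach S (fun e => AQ i e * w' e)]
        apply Finset.sum_congr rfl
        intro s _
        simp [hw', s.2, hAQ, mul_comm]
      rw [hsum, this]
      rfl
    have hw'supp : ∀ e, w' e ≠ 0 → x e ≠ 0 := by
      intro e he
      have heS : e ∈ S := by
        by_contra h
        exact he (by simp [hw', h])
      have heT : e ∈ T := Finset.mem_of_mem_erase heS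
      exact hwsupp e (by simpa [hT] using heT)
    have hcardlt : (Finset.univ.filter (fun e => w' e ≠ 0)).card < n0 := by
      have hsub : Finset.univ.filter (fun e => w' e ≠ 0) ⊆ S := by
        intro e he
        simp only [Finset.mem_filter] at he
        by_contra h
        exact he.2 (by simp [hw', h])
      calc (Finset.univ.filter (fun e => w' e ≠ 0)).card ≤ S.card := Finset.card_le_card hsub
        _ < T.card := Finset.card_erase_lt_of_mem he0T
        _ = n0 := hwcard
    exact hn0min _ hcardlt ⟨w', hw'ne, hw'ker, hw'supp, rfl⟩
  -- apply the Cramer lemma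
  set u : Fin m → ℚ := fun e => if e = e0 then 0 else w e with hu
  set d : Fin r → ℚ := fun i => -(w e0) * ((A i e0 : ℤ) : ℚ) with hd'
  have hdu : AQ.mulVec u = d := by
    funext i
    have h1 : AQ.mulVec u i = (∑ e : Fin m, AQ i e * w e) - AQ i e0 * w e0 := by
      simp only [Matrix.mulVec, dotProduct]
      rw [← Finset.sum_erase_add Finset.univ _ (Finset.mem_univ e0),
          ← Finset.sum_erase_add Finset.univ (fun e => AQ i e * w e) (Finset.mem_univ e0)]
      have : ∀ e ∈ Finset.univ.erase e0, AQ i e * u e = AQ i e * w e := by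
        intro e he
        rw [hu]
        simp [Finset.ne_of_mem_erase he]
      rw [Finset.sum_congr rfl this]
      simp [hu]
    have h2 : (∑ e : Fin m, AQ i e * w e) = 0 := by
      have := congrFun hwker i
      simpa [Matrix.mulVec, dotProduct] using this
    rw [h1, h2, hd', hAQ]
    simp [mul_comm]
  have hu0 : ∀ e, e ∉ S → u e = 0 := by
    intro e heS
    by_cases h : e = e0
    · simp [hu, h]
    · have : e ∉ T := by
        intro heT
        exact heS (Finset.mem_erase.mpr ⟨h, heT⟩)
      simp only [hT, Finset.mem_filter, Finset.mem_univ, true_and, not_not] at this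
      simp [hu, this]
  obtain ⟨f, g, hfinj, hginj, hgS, hmain⟩ := core_cramer A hTU S hind u d hdu hu0
  -- each entry of w is 0, w e0 or -w e0
  have hkey : ∀ e, w e = 0 ∨ w e = w e0 ∨ w e = -(w e0) := by
    intro e
    by_cases heT : e ∈ T
    · by_cases hee0 : e = e0
      · right; left; rw [hee0]
      · have heS : e ∈ S := Finset.mem_erase.mpr ⟨hee0, heT⟩
        obtain ⟨j, s, hgj, hs0, hue⟩ := hmain e heS
        have hcol : (d ∘ f) = (-(w e0)) • (fun i' => AQ (f i') e0) := by
          funext i'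
          simp [hd', hAQ]
        rw [hcol] at hue
        rw [Matrix.det_updateCol_smul] at hue
        have hsub : (AQ.submatrix f g).updateCol j (fun i' => AQ (f i') e0)
            = AQ.submatrix f (Function.update g j e0) := by
          ext i' j'
          rw [Matrix.updateCol_apply, Matrix.submatrix_apply, Matrix.submatrix_apply,
            Function.update_apply]
          by_cases hj : j' = j <;> simp [hj]
        rw [hsub] at hue
        have hTU' := hTU S.card f (Function.update g j e0) hfinj
          (update_inj hginj hgS he0S j)
        obtain ⟨t, ht⟩ := hTU'
        have hdet : (AQ.submatrix f (Function.update g j e0)).det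
            = (((A.submatrix f (Function.update g j e0)).det : ℤ) : ℚ) := by
          rw [hAQ, Matrix.submatrix_map]
          exact (RingHom.map_det (Int.castRingHom ℚ) _).symm
        have hue2 : w e = (s : ℚ) * (-(w e0) * ((t : ℤ) : ℚ)) := by
          have : u e = w e := by simp [hu, hee0]
          rw [← this, hue, hdet, ← ht]
        have hs' : (s : ℚ) = 1 ∨ (s : ℚ) = -1 := by
          rcases s with _ | _ | _
          · exact absurd rfl hs0
          · right; simp
          · left; simp
        have ht' : ((t : ℤ) : ℚ) = 0 ∨ ((t : ℤ) : ℚ) = 1 ∨ ((t : ℤ) : ℚ) = -1 := by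
          rcases t with _ | _ | _
          · left; simp
          · right; right; simp
          · right; left; simp
        rcases hs' with hs1 | hs1 <;> rcases ht' with ht1 | ht1 | ht1 <;>
          rw [hs1, ht1] at hue2 <;>
          first
            | (left; linarith)
            | (right; left; linarith)
            | (right; right; linarith)
    · left
      simpa [hT] using heT
  -- build the circuit
  set C : Fin m → ℤ := fun e => if w e = 0 then 0 else if w e = w e0 then 1 else -1 with hC
  have hCw : ∀ e, (C e : ℚ) * w e0 = w e := by
    intro e
    rcases hkey e with h | h | h
    · have hCe : C e = 0 := by
        show (if w e = 0 then (0:ℤ) else if w e = w e0 then 1 else -1) = 0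
        rw [if_pos h]
      rw [hCe, h]; simp
    · have hne : w e ≠ 0 := by rw [h]; exact hwe0
      have hCe : C e = 1 := by
        show (if w e = 0 then (0:ℤ) else if w e = w e0 then 1 else -1) = 1
        rw [if_neg hne, if_pos h]
      rw [hCe, h]; simp
    · have hne : w e ≠ 0 := by rw [h]; simpa using hwe0
      have hne2 : w e ≠ w e0 := by
        rw [h]; intro hh
        apply hwe0; linarith
      have hCe : C e = -1 := by
        show (if w e = 0 then (0:ℤ) else if w e = w e0 then 1 else -1) = -1
        rw [if_neg hne, if_neg hne2]
      rw [hCe, h]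
      push_cast
      ring
  have hCsupp : ∀ e, C e ≠ 0 ↔ w e ≠ 0 := by
    intro e
    constructor
    · intro h hw
      exact h (by simp [hC, hw])
    · intro h hc
      have := hCw e
      rw [hc] at this
      simp at this
      exact h this.symm
  have hCcast : ∀ e, (C e : ℚ) = w e / w e0 := by
    intro e
    rw [eq_div_iff hwe0]; exact hCw e
  have hCker : A.mulVec C = 0 := by
    funext i
    have : ((A.mulVec C i : ℤ) : ℚ) = 0 := by
      rw [← cast_mulVec]
      have : (fun e => ((C e : ℤ) : ℚ)) = (w e0)⁻¹ • w := by
        funext e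
        rw [hCcast e]
        simp [div_eq_inv_mul]
      rw [this, Matrix.mulVec_smul, hwker]
      simp
    exact_mod_cast this
  refine ⟨C, ⟨?_, ?_, hCker, ?_⟩, ?_⟩
  · intro e
    show (if w e = 0 then (0:ℤ) else if w e = w e0 then 1 else -1) = -1 ∨
      (if w e = 0 then (0:ℤ) else if w e = w e0 then 1 else -1) = 0 ∨
      (if w e = 0 then (0:ℤ) else if w e = w e0 then 1 else -1) = 1
    split_ifs <;> tauto
  · intro h
    have h2 : C e0 = 0 := congrFun h e0
    have : (if w e0 = 0 then (0:ℤ) else if w e0 = w e0 then 1 else -1) = 0 := h2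
    rw [if_neg hwe0, if_pos rfl] at this
    exact one_ne_zero this
  · -- minimality
    intro v hv0 hvker hvsub
    have hvQ : AQ.mulVec (fun e => ((v e : ℤ) : ℚ)) = 0 := by
      funext i
      rw [cast_mulVec, congrFun hvker i]
      rfl
    have hvQ0 : (fun e => ((v e : ℤ) : ℚ)) ≠ 0 := by
      intro h
      apply hv0
      funext e
      have := congrFun h e
      simp only [Pi.zero_apply] at this
      exact_mod_cast this
    have hvsupp : ∀ e, (v e : ℚ) ≠ 0 → x e ≠ 0 := by
      intro e he
      have : v e ≠ 0 := by exact_mod_cast he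
      have : C e ≠ 0 := hvsub this
      exact hwsupp e ((hCsupp e).mp this)
    have hvP : P (Finset.univ.filter (fun e => (v e : ℚ) ≠ 0)).card :=
      ⟨_, hvQ0, hvQ, hvsupp, rfl⟩
    have hge : n0 ≤ (Finset.univ.filter (fun e => (v e : ℚ) ≠ 0)).card :=
      Nat.sInf_le hvP
    have hsubF : Finset.univ.filter (fun e => (v e : ℚ) ≠ 0) ⊆ T := by
      intro e he
      simp only [Finset.mem_filter, Finset.mem_univ, true_and] at he
      have : v e ≠ 0 := by exact_mod_cast he
      have : C e ≠ 0 := hvsub this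
      simp [hT, (hCsupp e).mp this]
    have heqF : Finset.univ.filter (fun e => (v e : ℚ) ≠ 0) = T :=
      Finset.eq_of_subset_of_card_le hsubF (by rw [hwcard]; exact hge)
    ext e
    simp only [Set.mem_setOf_eq]
    constructor
    · intro h
      exact (hCsupp e).mpr (by
        have : e ∈ T := heqF ▸ (by simp [h] : e ∈ Finset.univ.filter (fun e => (v e : ℚ) ≠ 0))
        simpa [hT] using this)
    · intro h
      have : w e ≠ 0 := (hCsupp e).mp h
      have heT : e ∈ T := by simp [hT, this]
      have := heqF.symm ▸ heT
      simp only [Finset.mem_filter, Finset.mem_univ, true_and] at this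
      exact_mod_cast this
  · intro e h
    exact hwsupp e ((hCsupp e).mp h)

private lemma IsCircuit.neg {r m : ℕ} {A : Matrix (Fin r) (Fin m) ℤ} {C : Fin m → ℤ}
    (h : IsCircuit A C) : IsCircuit A (-C) := by
  obtain ⟨hsv, hne, hker, hmin⟩ := h
  refine ⟨fun e => ?_, fun hh => hne (by simpa using congrArg Neg.neg hh), ?_, ?_⟩
  · rcases hsv e with h | h | h <;> simp [h]
  · rw [Matrix.mulVec_neg, hker, neg_zero]
  · intro v hv0 hvker hsub
    have : {e | (-C) e ≠ 0} = {e | C e ≠ 0} := by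
      ext e; simp
    rw [this] at hsub ⊢
    exact hmin v hv0 hvker hsub

/-- Conformal circuit lemma. -/
private lemma exists_conformal_circuit {r m : ℕ} (A : Matrix (Fin r) (Fin m) ℤ)
    (hTU : A.IsTotallyUnimodular) :
    ∀ n : ℕ, ∀ x : Fin m → ℚ, (Finset.univ.filter (fun e => x e ≠ 0)).card ≤ n →
    x ≠ 0 → (A.map (Int.cast : ℤ → ℚ)).mulVec x = 0 →
    ∃ C : Fin m → ℤ, IsCircuit A C ∧ (∀ e, C e ≠ 0 → 0 < (C e : ℚ) * x e) := by
  intro n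
  induction n with
  | zero =>
    intro x hcard hx _
    exfalso
    apply hx
    funext e
    by_contra h
    have : e ∈ Finset.univ.filter (fun e => x e ≠ 0) := by
      simp only [Finset.mem_filter, Finset.mem_univ, true_and]
      intro h'
      exact h (by rw [h']; rfl)
    have := Finset.card_pos.mpr ⟨e, this⟩
    omega
  | succ n ih =>
    intro x hcard hx hker
    obtain ⟨C, hC, hCsub⟩ := exists_circuit A hTU x hx hker
    by_cases hgood : ∀ e, C e ≠ 0 → 0 < (C e : ℚ) * x e
    · exact ⟨C, hC, hgood⟩
    by_cases hbad : ∀ e, C e ≠ 0 → (C e : ℚ) * x e < 0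
    · refine ⟨-C, hC.neg, ?_⟩
      intro e he
      have hCe : C e ≠ 0 := by simpa using he
      have h2 := hbad e hCe
      have h3 : ((-C) e : ℚ) * x e = -((C e : ℚ) * x e) := by
        push_cast [Pi.neg_apply]
        ring
      rw [h3]
      linarith
    -- mixed case: descent
    push_neg at hgood hbad
    obtain ⟨em, hem0, hemle⟩ := hgood
    obtain ⟨ep, hep0, heple⟩ := hbad
    have hxe : ∀ e, C e ≠ 0 → x e ≠ 0 := hCsub
    have hCQ : ∀ e, C e ≠ 0 → (C e : ℚ) ≠ 0 := fun e h => by exact_mod_cast h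
    have hxem : (x em : ℚ) ≠ 0 := hxe em hem0
    have hem : (C em : ℚ) * x em < 0 :=
      lt_of_le_of_ne hemle (mul_ne_zero (hCQ em hem0) hxem)
    have hep : 0 < (C ep : ℚ) * x ep :=
      lt_of_le_of_ne heple (Ne.symm (mul_ne_zero (hCQ ep hep0) (hxe ep hep0)))
    set D := Finset.univ.filter (fun e => C e ≠ 0 ∧ (C e : ℚ) * x e < 0) with hD
    have hDne : D.Nonempty := ⟨em, by simp [hD, hem0, hem]⟩
    set t := D.inf' hDne (fun e => |x e|) with ht
    have htpos : 0 < t := by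
      rw [ht, Finset.lt_inf'_iff]
      intro e heD
      simp only [hD, Finset.mem_filter] at heD
      exact abs_pos.mpr (hxe e heD.2.1)
    set y : Fin m → ℚ := fun e => x e + t * (C e : ℚ) with hy
    have hyker : (A.map (Int.cast : ℤ → ℚ)).mulVec y = 0 := by
      have hy2 : y = x + t • (fun e => ((C e : ℤ) : ℚ)) := by
        funext e; simp [hy, smul_eq_mul]
      rw [hy2, Matrix.mulVec_add, Matrix.mulVec_smul, hker]
      have hCker0 : (A.map (Int.cast : ℤ → ℚ)).mulVec (fun e => ((C e : ℤ) : ℚ)) = 0 := by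
        funext i
        have h0 : A.mulVec C i = 0 := by rw [congrFun hC.2.2.1 i]; rfl
        rw [cast_mulVec A C i, h0]
        simp
      rw [hCker0]
      simp
    have hsign : ∀ e, y e ≠ 0 → 0 < y e * x e := by
      intro e hye
      by_cases hCe : C e = 0
      · have hyx : y e = x e := by simp [hy, hCe]
        rw [hyx]
        exact mul_self_pos.mpr (by rwa [hyx] at hye)
      · have hxe' := hxe e hCe
        by_cases hpos : 0 < (C e : ℚ) * x e
        · have : 0 < (x e + t * C e) * x e := by nlinarith [mul_self_pos.mpr hxe']
          simpa [hy] using this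
        · have hneg : (C e : ℚ) * x e < 0 :=
            lt_of_le_of_ne (not_lt.mp hpos) (mul_ne_zero (hCQ e hCe) hxe')
          have heD : e ∈ D := by simp [hD, hCe, hneg]
          have htle : t ≤ |x e| := Finset.inf'_le _ heD
          rcases hC.1 e with h1 | h1 | h1
          · have hc : (C e : ℚ) = -1 := by rw [h1]; norm_num
            have hx0 : 0 < x e := by rw [hc] at hneg; linarith
            have htle2 : t ≤ x e := by rwa [abs_of_pos hx0] at htle
            have hy0 : 0 ≤ y e := by simp only [hy, hc]; linarith
            have : 0 < y e := lt_of_le_of_ne hy0 (Ne.symm hye)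
            exact mul_pos this hx0
          · exact absurd h1 hCe
          · have hc : (C e : ℚ) = 1 := by rw [h1]; norm_num
            have hx0 : x e < 0 := by rw [hc] at hneg; linarith
            have htle2 : t ≤ -x e := by rwa [abs_of_neg hx0] at htle
            have hy0 : y e ≤ 0 := by simp only [hy, hc]; linarith
            have : y e < 0 := lt_of_le_of_ne hy0 hye
            exact mul_pos_of_neg_of_neg this hx0
    have hysub : ∀ e, y e ≠ 0 → x e ≠ 0 := by
      intro e hye
      by_cases hCe : C e = 0
      · intro h
        exact hye (by simp [hy, hCe, h])
      · exact hxe e hCe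
    obtain ⟨estar, hestarD, hstar⟩ := Finset.exists_mem_eq_inf' hDne (fun e => |x e|)
    have hstar' : t = |x estar| := by rw [ht, hstar]
    have hystar : y estar = 0 := by
      simp only [hD, Finset.mem_filter, Finset.mem_univ, true_and] at hestarD
      obtain ⟨hCe, hneg⟩ := hestarD
      rcases hC.1 estar with h1 | h1 | h1
      · have hc : (C estar : ℚ) = -1 := by rw [h1]; norm_num
        have hx0 : 0 < x estar := by rw [hc] at hneg; linarith
        have : t = x estar := by rw [hstar', abs_of_pos hx0]
        simp only [hy, hc, this]
        ring
      · exact absurd h1 hCe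
      · have hc : (C estar : ℚ) = 1 := by rw [h1]; norm_num
        have hx0 : x estar < 0 := by rw [hc] at hneg; linarith
        have : t = -x estar := by rw [hstar', abs_of_neg hx0]
        simp only [hy, hc, this]
        ring
    have hxstar : x estar ≠ 0 := by
      simp only [hD, Finset.mem_filter, Finset.mem_univ, true_and] at hestarD
      exact hxe estar hestarD.1
    have hssub : (Finset.univ.filter fun e => y e ≠ 0) ⊂ (Finset.univ.filter fun e => x e ≠ 0) := by
      constructor
      · intro e he
        simp only [Finset.mem_filter, Finset.mem_univ, true_and] at he ⊢
        exact hysub e he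
      · intro hsup
        have : estar ∈ (Finset.univ.filter fun e => y e ≠ 0) :=
          hsup (by simp only [Finset.mem_filter, Finset.mem_univ, true_and]; exact hxstar)
        simp only [Finset.mem_filter, Finset.mem_univ, true_and] at this
        exact this hystar
    have hcardle : (Finset.univ.filter fun e => y e ≠ 0).card ≤ n := by
      have := Finset.card_lt_card hssub
      omega
    have hyep : y ep ≠ 0 := by
      intro h
      have hprod : 0 < (x ep + t * (C ep : ℚ)) * x ep := by
        nlinarith [mul_self_pos.mpr (hxe ep hep0)]
      have : y ep * x ep = 0 := by rw [h, zero_mul]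
      simp only [hy] at this
      nlinarith [hprod]
    have hyne : y ≠ 0 := by
      intro h
      exact hyep (by rw [h]; rfl)
    obtain ⟨C2, hC2, hC2conf⟩ := ih y hcardle hyne hyker
    refine ⟨C2, hC2, ?_⟩
    intro e he
    have h1 := hC2conf e he
    have hye : y e ≠ 0 := by
      intro h
      rw [h, mul_zero] at h1
      exact lt_irrefl 0 h1
    have h2 := hsign e hye
    have hy2 : 0 < y e * y e := mul_self_pos.mpr hye
    nlinarith [mul_pos h1 h2, hy2]

private lemma psi_reversal {r m : ℕ} {A : Matrix (Fin r) (Fin m) ℤ} {O O' : Fin m → ℤ}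
    (h : CircuitReversal A O O') : psi A O' = psi A O := by
  obtain ⟨C, hC, hcomp, hneg, hsame⟩ := h
  have hpt : (fun e => (O' e + 1) / 2) = (fun e => (O e + 1) / 2) - C := by
    funext e
    simp only [Pi.sub_apply]
    by_cases h0 : C e = 0
    · rw [hsame e h0, h0, sub_zero]
    · have hOe := hcomp e h0
      have hO'e := hneg e h0
      rcases hC.1 e with h1 | h1 | h1
      · rw [hO'e, hOe, h1]; decide
      · exact absurd h1 h0
      · rw [hO'e, hOe, h1]; decide
  rw [psi, psi, hpt, Matrix.mulVec_sub, hC.2.2.1, sub_zero]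

private lemma psi_circEquiv {r m : ℕ} {A : Matrix (Fin r) (Fin m) ℤ} {O O' : Fin m → ℤ}
    (h : CircEquiv A O O') : psi A O = psi A O' := by
  induction h with
  | rel a b hab => exact (psi_reversal hab).symm
  | refl a => rfl
  | symm a b _ ih => exact ih.symm
  | trans a b c _ _ ih1 ih2 => exact ih1.trans ih2

private lemma circEquiv_of_psi_eq {r m : ℕ} (A : Matrix (Fin r) (Fin m) ℤ)
    (hTU : A.IsTotallyUnimodular) :
    ∀ n : ℕ, ∀ O O' : Fin m → ℤ, IsOrientation O → IsOrientation O' →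
    psi A O = psi A O' → (Finset.univ.filter (fun e => O e ≠ O' e)).card ≤ n →
    CircEquiv A O O' := by
  intro n
  induction n with
  | zero =>
    intro O O' _ _ _ hcard
    have : O = O' := by
      funext e
      by_contra h
      have : e ∈ Finset.univ.filter (fun e => O e ≠ O' e) := by simp [h]
      have := Finset.card_pos.mpr ⟨e, this⟩
      omega
    rw [this]
    exact Relation.EqvGen.refl O'
  | succ n ih =>
    intro O O' hO hO' hpsi hcard
    by_cases heq : O = O'
    · rw [heq]; exact Relation.EqvGen.refl O'
    -- the rational difference vector
    set Dq : Fin m → ℚ := fun e => ((O' e : ℚ) - (O e : ℚ)) / 2 with hDq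
    have hDval : ∀ e, O e ≠ O' e → Dq e = -(O e : ℚ) := by
      intro e h
      rcases hO e with h1 | h1 <;> rcases hO' e with h2 | h2 <;>
        simp [hDq, h1, h2] at h ⊢ <;> norm_num
    have hDzero : ∀ e, O e = O' e → Dq e = 0 := by
      intro e h
      simp [hDq, h]
    have hDne : Dq ≠ 0 := by
      intro h
      apply heq
      funext e
      by_contra hne
      have h1 := hDval e hne
      have h2 := congrFun h e
      simp only [Pi.zero_apply] at h2
      rw [h2] at h1
      rcases hO e with h3 | h3 <;> rw [h3] at h1 <;> norm_num at h1
    have hDker : (A.map (Int.cast : ℤ → ℚ)).mulVec Dq = 0 := by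
      have hsplit : Dq = (fun e => (((O' e + 1) / 2 : ℤ) : ℚ)) - (fun e => (((O e + 1) / 2 : ℤ) : ℚ)) := by
        funext e
        simp only [Pi.sub_apply, hDq]
        rcases hO e with h1 | h1 <;> rcases hO' e with h2 | h2 <;>
          rw [h1, h2] <;> norm_num
      rw [hsplit, Matrix.mulVec_sub]
      funext i
      simp only [Pi.sub_apply, Pi.zero_apply]
      rw [cast_mulVec, cast_mulVec]
      have := congrFun hpsi i
      rw [psi, psi] at this
      rw [this]
      ring
    obtain ⟨C, hC, hCconf⟩ := exists_conformal_circuit A hTU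
      (Finset.univ.filter (fun e => Dq e ≠ 0)).card Dq le_rfl hDne hDker
    -- on the support of C, O e = -C e
    have hCO : ∀ e, C e ≠ 0 → C e = -O e ∧ O' e = -O e := by
      intro e he
      have h1 := hCconf e he
      have hDne' : Dq e ≠ 0 := by
        intro h
        rw [h, mul_zero] at h1
        exact lt_irrefl 0 h1
      have hOO' : O e ≠ O' e := by
        intro h
        exact hDne' (hDzero e h)
      have hD := hDval e hOO'
      rcases hC.1 e with h2 | h2 | h2 <;> rcases hO e with h3 | h3 <;>
        rw [hD, h2, h3] at h1 <;> rw [h2, h3] <;> norm_num at h1 <;> norm_num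
      · rcases hO' e with h4 | h4
        · exact absurd h4 (by intro hh; rw [h3, hh] at hOO'; exact hOO' rfl)
        · exact h4
      · rcases hO' e with h4 | h4
        · exact h4
        · exact absurd h4 (by intro hh; rw [h3, hh] at hOO'; exact hOO' rfl)
    -- the reversal
    set O1 : Fin m → ℤ := fun e => if C e = 0 then O e else -O e with hO1
    have hrev : CircuitReversal A O O1 := by
      refine ⟨-C, hC.neg, ?_, ?_, ?_⟩
      · intro e he
        have he' : C e ≠ 0 := by simpa using he
        have := (hCO e he').1
        simp only [Pi.neg_apply]
        omega
      · intro e he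
        have he' : C e ≠ 0 := by simpa using he
        simp [hO1, he']
      · intro e he
        have he' : C e = 0 := by simpa using he
        simp [hO1, he']
    have hO1or : IsOrientation O1 := by
      intro e
      by_cases h : C e = 0
      · simpa [hO1, h] using hO e
      · rcases hO e with h1 | h1 <;> simp [hO1, h, h1]
    have hpsi1 : psi A O1 = psi A O' := by
      rw [psi_reversal hrev, hpsi]
    -- support decreases
    obtain ⟨e1, he1⟩ : ∃ e, C e ≠ 0 := by
      by_contra h
      push_neg at h
      exact hC.2.1 (funext h)
    have he1OO' : O e1 ≠ O' e1 := by
      intro h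
      have h1 := hCconf e1 he1
      rw [hDzero e1 h, mul_zero] at h1
      exact lt_irrefl 0 h1
    have hsub : (Finset.univ.filter (fun e => O1 e ≠ O' e)) ⊂
        (Finset.univ.filter (fun e => O e ≠ O' e)) := by
      constructor
      · intro e he
        simp only [Finset.mem_filter, Finset.mem_univ, true_and] at he ⊢
        by_cases h : C e = 0
        · rwa [show O1 e = O e by simp [hO1, h]] at he
        · exfalso
          apply he
          rw [show O1 e = -O e by simp [hO1, h], (hCO e h).2]
      · intro hsup
        have h1 : e1 ∈ Finset.univ.filter (fun e => O e ≠ O' e) := by simp [he1OO']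
        have h2 := hsup h1
        simp only [Finset.mem_filter, Finset.mem_univ, true_and] at h2
        apply h2
        rw [show O1 e1 = -O e1 by simp [hO1, he1], (hCO e1 he1).2]
    have hcard1 : (Finset.univ.filter (fun e => O1 e ≠ O' e)).card ≤ n := by
      have := Finset.card_lt_card hsub
      omega
    exact Relation.EqvGen.trans O O1 O'
      (Relation.EqvGen.rel O O1 hrev) (ih O1 O' hO1or hO' hpsi1 hcard1)

/-- Base case : a 0/1 real solution gives an orientation. -/
private lemma round_base {r m : ℕ} (A : Matrix (Fin r) (Fin m) ℤ) (y : Fin r → ℤ)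
    (x : Fin m → ℝ) (h01 : ∀ e, x e = 0 ∨ x e = 1)
    (hx : (A.map ((↑) : ℤ → ℝ)).mulVec x = fun i => (y i : ℝ)) :
    ∃ O : Fin m → ℤ, IsOrientation O ∧ psi A O = y := by
  classical
  refine ⟨fun e => if x e = 1 then 1 else -1, fun e => by by_cases h : x e = 1 <;> simp [h], ?_⟩
  have hcast : (fun e => ((((if x e = 1 then (1:ℤ) else -1) + 1) / 2 : ℤ) : ℝ)) = x := by
    funext e
    rcases h01 e with h | h
    · rw [h]
      have : x e ≠ 1 := by rw [h]; norm_num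
      simp [this]
    · simp [h]
  funext i
  have h1 : ((psi A (fun e => if x e = 1 then 1 else -1) i : ℤ) : ℝ) = ((y i : ℤ) : ℝ) := by
    rw [psi, ← cast_mulVec (K := ℝ) A _ i]
    rw [show (fun e => ((((if x e = 1 then (1:ℤ) else -1) + 1) / 2 : ℤ) : ℝ)) = x from hcast]
    rw [hx]
  exact_mod_cast h1

/-- Induction : any real point of the zonotope with integral image com from an orientation. -/
private lemma round_lemma {r m : ℕ} (A : Matrix (Fin r) (Fin m) ℤ)
    (hTU : A.IsTotallyUnimodular) (y : Fin r → ℤ) :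
    ∀ n : ℕ, ∀ x : Fin m → ℝ,
    (Finset.univ.filter (fun e => x e ≠ 0 ∧ x e ≠ 1)).card ≤ n →
    (∀ e, x e ∈ Set.Icc (0:ℝ) 1) →
    (A.map ((↑) : ℤ → ℝ)).mulVec x = (fun i => (y i : ℝ)) →
    ∃ O : Fin m → ℤ, IsOrientation O ∧ psi A O = y := by
  classical
  intro n
  induction n with
  | zero =>
    intro x hcard _ hx
    refine round_base A y x (fun e => ?_) hx
    by_contra h
    push_neg at h
    have : e ∈ Finset.univ.filter (fun e => x e ≠ 0 ∧ x e ≠ 1) := by simp [h.1, h.2]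
    have := Finset.card_pos.mpr ⟨e, this⟩
    omega
  | succ n ih =>
    intro x hcard hbox hx
    set F := Finset.univ.filter (fun e => x e ≠ 0 ∧ x e ≠ 1) with hF
    by_cases hFe : F = ∅
    · refine round_base A y x (fun e => ?_) hx
      by_contra h
      push_neg at h
      have : e ∈ F := by simp [hF, h.1, h.2]
      rw [hFe] at this
      simp at this
    have hFne : F.Nonempty := Finset.nonempty_of_ne_empty hFe
    have hFopen : ∀ e ∈ F, 0 < x e ∧ x e < 1 := by
      intro e he
      simp only [hF, Finset.mem_filter, Finset.mem_univ, true_and] at he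
      obtain ⟨h0, h1⟩ := he
      obtain ⟨hl, hr⟩ := hbox e
      exact ⟨lt_of_le_of_ne hl (Ne.symm h0), lt_of_le_of_ne hr h1⟩
    by_cases hind : LinearIndependent ℝ (fun s : {e // e ∈ F} => fun i : Fin r => ((A i s.1 : ℤ) : ℝ))
    · -- independent case: contradiction, all coordinates in F would be integral
      exfalso
      set u : Fin m → ℝ := fun e => if e ∈ F then x e else 0 with hu
      set z : Fin m → ℤ := fun e => if e ∈ F then 0 else (if x e = 1 then 1 else 0) with hz
      have hxuz : x = u + fun e => ((z e : ℤ) : ℝ) := by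
        funext e
        simp only [Pi.add_apply, hu, hz]
        by_cases h : e ∈ F
        · simp [h]
        · simp only [h, if_false]
          have h01 : x e = 0 ∨ x e = 1 := by
            simp only [hF, Finset.mem_filter, Finset.mem_univ, true_and, not_and_or,
              not_not] at h
            tauto
          rcases h01 with h1 | h1
          · have : x e ≠ 1 := by rw [h1]; norm_num
            simp [h1, this]
          · simp [h1]
      set d' : Fin r → ℤ := fun i => y i - A.mulVec z i with hd'
      have hdu : (A.map ((↑) : ℤ → ℝ)).mulVec u = fun i => ((d' i : ℤ) : ℝ) := by
        funext i
        have h1 : (A.map ((↑) : ℤ → ℝ)).mulVec x i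
            = (A.map ((↑) : ℤ → ℝ)).mulVec u i
              + (A.map ((↑) : ℤ → ℝ)).mulVec (fun e => ((z e : ℤ) : ℝ)) i := by
          rw [show x = u + fun e => ((z e : ℤ) : ℝ) from hxuz, Matrix.mulVec_add]
          rfl
        have h2 := congrFun hx i
        rw [h2] at h1
        rw [cast_mulVec A z i] at h1
        rw [hd']
        push_cast
        linarith
      have hu0 : ∀ e, e ∉ F → u e = 0 := by
        intro e he
        simp [hu, he]
      obtain ⟨f, g, hfinj, hginj, hgF, hmain⟩ :=
        core_cramer (K := ℝ) A hTU F hind u _ hdu hu0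
      obtain ⟨e0, he0⟩ := hFne
      obtain ⟨j, s, hgj, hs0, hue⟩ := hmain e0 he0
      -- the determinant is an integer
      have hdetint : (((A.map ((↑) : ℤ → ℝ)).submatrix f g).updateCol j
          ((fun i => ((d' i : ℤ) : ℝ)) ∘ f)).det
          = ((((A.submatrix f g).updateCol j (d' ∘ f)).det : ℤ) : ℝ) := by
        have : ((A.map ((↑) : ℤ → ℝ)).submatrix f g).updateCol j
            ((fun i => ((d' i : ℤ) : ℝ)) ∘ f)
            = ((A.submatrix f g).updateCol j (d' ∘ f)).map ((↑) : ℤ → ℝ) := by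
          ext i' j'
          rw [Matrix.updateCol_apply, Matrix.map_apply, Matrix.updateCol_apply]
          by_cases h : j' = j <;> simp [h]
        rw [this]
        exact (RingHom.map_det (Int.castRingHom ℝ) _).symm
      rw [hdetint] at hue
      have hxe0 : x e0 = u e0 := by simp [hu, he0]
      obtain ⟨h0, h1⟩ := hFopen e0 he0
      set K : ℤ := ((A.submatrix f g).updateCol j (d' ∘ f)).det with hK
      have hsval : (s : ℝ) = 1 ∨ (s : ℝ) = -1 := by
        rcases s with _ | _ | _
        · exact absurd rfl hs0
        · right; simp
        · left; simp
      rcases hsval with hs | hs <;> rw [hs] at hue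
      · rw [hxe0, hue] at h0 h1
        have hK0 : 0 < K := by exact_mod_cast (by linarith : (0:ℝ) < (K:ℝ))
        have hK1 : K < 1 := by exact_mod_cast (by linarith : (K:ℝ) < 1)
        omega
      · rw [hxe0, hue] at h0 h1
        have hK0 : 0 < -K := by
          have : (0:ℝ) < -(K:ℝ) := by linarith
          exact_mod_cast this
        have hK1 : -K < 1 := by
          have : -(K:ℝ) < 1 := by linarith
          exact_mod_cast this
        omega
    · -- dependent case: move along a kernel vector
      rw [Fintype.not_linearIndependent_iff] at hind
      obtain ⟨gg, hgg, s0, hs0⟩ := hind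
      set v : Fin m → ℝ := fun e => if h : e ∈ F then gg ⟨e, h⟩ else 0 with hv
      have hvker : (A.map ((↑) : ℤ → ℝ)).mulVec v = 0 := by
        funext i
        have := congrFun hgg i
        simp only [Finset.sum_apply, Pi.smul_apply, smul_eq_mul, Pi.zero_apply] at this
        simp only [Matrix.mulVec, dotProduct, Pi.zero_apply]
        have hz : ∀ e ∈ Finset.univ, e ∉ F → (A.map ((↑) : ℤ → ℝ)) i e * v e = 0 := by
          intro e _ he
          simp [hv, he]
        rw [show (∑ e : Fin m, (A.map ((↑) : ℤ → ℝ)) i e * v e)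
            = ∑ e ∈ F, (A.map ((↑) : ℤ → ℝ)) i e * v e from
          (Finset.sum_subset (Finset.subset_univ F) hz).symm]
        rw [← Finset.sum_attach F (fun e => (A.map ((↑) : ℤ → ℝ)) i e * v e)]
        rw [← this]
        apply Finset.sum_congr rfl
        intro e _
        simp [hv, e.2, mul_comm]
      set Sv := Finset.univ.filter (fun e => v e ≠ 0) with hSv
      have hvs0 : v s0.1 = gg s0 := by rw [hv]; exact dif_pos s0.2
      have hSvne : Sv.Nonempty := by
        refine ⟨s0.1, ?_⟩
        simp only [hSv, Finset.mem_filter, Finset.mem_univ, true_and]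
        rw [hvs0]
        exact hs0
      have hSvF : ∀ e ∈ Sv, e ∈ F := by
        intro e he
        simp only [hSv, Finset.mem_filter, Finset.mem_univ, true_and] at he
        by_contra h
        exact he (by simp [hv, h])
      set step : Fin m → ℝ := fun e => if 0 < v e then (1 - x e) / v e else -x e / v e with hstep
      set t := Sv.inf' hSvne step with htt
      have hstep_pos : ∀ e ∈ Sv, 0 < step e := by
        intro e he
        have hve : v e ≠ 0 := by
          simp only [hSv, Finset.mem_filter, Finset.mem_univ, true_and] at he
          exact he
        obtain ⟨h0, h1⟩ := hFopen e (hSvF e he)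
        by_cases h : 0 < v e
        · rw [hstep]
          simp only [h, if_pos]
          exact div_pos (by linarith) h
        · have hvn : v e < 0 := lt_of_le_of_ne (not_lt.mp h) hve
          rw [hstep]
          simp only [h, if_false]
          rw [div_pos_iff]
          right
          constructor <;> linarith
      have htpos : 0 < t := by
        rw [htt, Finset.lt_inf'_iff]
        exact hstep_pos
      set x' : Fin m → ℝ := fun e => x e + t * v e with hx'
      have hbounds : ∀ e, x' e ∈ Set.Icc (0:ℝ) 1 := by
        intro e
        by_cases hve : v e = 0
        · simpa [hx', hve] using hbox e
        · have heSv : e ∈ Sv := by simp [hSv, hve]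
          have htle : t ≤ step e := Finset.inf'_le _ heSv
          obtain ⟨h0, h1⟩ := hFopen e (hSvF e heSv)
          by_cases h : 0 < v e
          · have hs : step e = (1 - x e) / v e := by simp [hstep, h]
            rw [hs] at htle
            have h2 : t * v e ≤ (1 - x e) / v e * v e :=
              mul_le_mul_of_nonneg_right htle h.le
            rw [div_mul_cancel₀ _ (ne_of_gt h)] at h2
            constructor
            · simp only [hx']
              nlinarith
            · simp only [hx']
              linarith
          · have hvn : v e < 0 := lt_of_le_of_ne (not_lt.mp h) hve
            have hs : step e = -x e / v e := by simp [hstep, h]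
            rw [hs] at htle
            have h2 : -x e / v e * v e ≤ t * v e :=
              mul_le_mul_of_nonpos_right htle hvn.le
            rw [div_mul_cancel₀ _ (ne_of_lt hvn)] at h2
            constructor
            · simp only [hx']
              linarith
            · simp only [hx']
              nlinarith
      have hx'ker : (A.map ((↑) : ℤ → ℝ)).mulVec x' = fun i => ((y i : ℤ) : ℝ) := by
        have hxe : x' = x + t • v := by
          funext e
          simp [hx', smul_eq_mul]
        rw [hxe, Matrix.mulVec_add, Matrix.mulVec_smul, hvker, hx]
        funext i
        simp
      obtain ⟨estar, hestar, hstareq⟩ := Finset.exists_mem_eq_inf' hSvne step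
      have htstar : t = step estar := by rw [htt, hstareq]
      have hvestar : v estar ≠ 0 := by
        simp only [hSv, Finset.mem_filter, Finset.mem_univ, true_and] at hestar
        exact hestar
      have hx'star : x' estar = 1 ∨ x' estar = 0 := by
        by_cases h : 0 < v estar
        · left
          have hs : step estar = (1 - x estar) / v estar := by simp [hstep, h]
          simp only [hx']
          rw [htstar, hs, div_mul_cancel₀ _ (ne_of_gt h)]
          ring
        · right
          have hs : step estar = -x estar / v estar := by simp [hstep, h]
          simp only [hx']
          rw [htstar, hs, div_mul_cancel₀ _ hvestar]
          ring
      have hsubF : (Finset.univ.filter (fun e => x' e ≠ 0 ∧ x' e ≠ 1)) ⊂ F := by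
        constructor
        · intro e he
          simp only [Finset.mem_filter, Finset.mem_univ, true_and] at he
          by_cases hve : v e = 0
          · have : x' e = x e := by simp [hx', hve]
            rw [this] at he
            simp [hF, he.1, he.2]
          · exact hSvF e (by simp [hSv, hve])
        · intro hsup
          have h1 : estar ∈ F := hSvF estar hestar
          have h2 := hsup h1
          simp only [Finset.mem_filter, Finset.mem_univ, true_and] at h2
          rcases hx'star with h | h
          · exact h2.2 h
          · exact h2.1 h
      have hcard' : (Finset.univ.filter (fun e => x' e ≠ 0 ∧ x' e ≠ 1)).card ≤ n := by
        have := Finset.card_lt_card hsubF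
        omega
      exact ih x' hcard' hbounds hx'ker

theorem stmt7 {r m : ℕ} (A : Matrix (Fin r) (Fin m) ℤ)
    (hTU : A.IsTotallyUnimodular) (hrank : (A.map ((↑) : ℤ → ℝ)).rank = r) :
    ({y : Fin r → ℤ | ∃ O : Fin m → ℤ, IsOrientation O ∧ psi A O = y} =
      {y : Fin r → ℤ | ∃ x : Fin m → ℝ, (∀ e, x e ∈ Set.Icc (0:ℝ) 1) ∧
        (A.map ((↑) : ℤ → ℝ)).mulVec x = fun i => (y i : ℝ)}) ∧
    ∀ O O' : Fin m → ℤ, IsOrientation O → IsOrientation O' →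
      (psi A O = psi A O' ↔ CircEquiv A O O') := by
  constructor
  · ext y
    simp only [Set.mem_setOf_eq]
    constructor
    · rintro ⟨O, hO, rfl⟩
      refine ⟨fun e => (((O e + 1) / 2 : ℤ) : ℝ), ?_, ?_⟩
      · intro e
        simp only []
        rcases hO e with h | h <;> rw [h] <;> norm_num [Set.mem_Icc]
      · funext i
        rw [cast_mulVec A _ i]
        rfl
    · rintro ⟨x, hbox, hx⟩
      exact round_lemma A hTU y _ x le_rfl hbox hx
  · intro O O' hO hO'
    constructor
    · intro h
      exact circEquiv_of_psi_eq A hTU _ O O' hO hO' h le_rfl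
    · exact psi_circEquiv
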